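/- arXiv:2506.23865 — 2 statements merged into one kernel-verified Lean document; each statement's English description precedes it below -/
import Mathlib

section
/- (The Original Central Sets Theorem.) Let l ∈ ℕ and for each i ∈ {1,…,l} let ⟨y_{i,n}⟩_{n=1}^∞ be a sequence in ℤ. Let C be a central subset of ℕ. Then there exist a sequence ⟨a_n⟩_{n=1}^∞ in ℕ and a sequence ⟨H_n⟩_{n=1}^∞ of nonempty finite subsets of ℕ such that: (1) for all n, max H_n < min H_{n+1}; and (2) for all nonempty finite F ⊆ ℕ and all i ∈ {1,…,l}, Σ_{n∈F} (a_n + Σ_{t∈H_n} y_{i,t}) ∈ C. -/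
open scoped Classical

namespace TotalSG

/-- the extension of `+` to `βS`: `A ∈ p+q ↔ {x : -x+A ∈ q} ∈ p`. -/
def uadd {S : Type} [Add S] (p q : Ultrafilter S) : Ultrafilter S :=
  p.bind fun x => q.map fun y => x + y

/-- a two-sided ideal of `(βS,+)`. -/
def IsIdeal {S : Type} [Add S] (I : Set (Ultrafilter S)) : Prop :=
  I.Nonempty ∧ (∀ p : Ultrafilter S, ∀ q ∈ I, uadd p q ∈ I) ∧
    (∀ q ∈ I, ∀ p : Ultrafilter S, uadd q p ∈ I)

/-- `K(βS)`, the smallest two-sided ideal of `βS` (= the intersection of all two-sided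
ideals). -/
def KSet (S : Type) [Add S] : Set (Ultrafilter S) := ⋂₀ {I | IsIdeal I}

/-- `C ⊆ S` is central: it belongs to some idempotent ultrafilter in `K(βS)`. -/
def IsCentral {S : Type} [Add S] (C : Set S) : Prop :=
  ∃ p : Ultrafilter S, uadd p p = p ∧ p ∈ KSet S ∧ C ∈ p

/-- addition on `Option S`, with `none` the formal empty sum. -/
def oadd {S : Type} [Add S] : Option S → Option S → Option S
  | none, y => y
  | some a, none => some a
  | some a, some b => some (a + b)

/-- sum of a list of (optional) terms; `none` iff there are no terms. -/
def osumO {S : Type} [Add S] (l : List (Option S)) : Option S := l.foldr oadd none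

/-- `Σ_{t ∈ H} f(t)` (in increasing order of indices); `none` iff `H = ∅`. -/
def osumF {S : Type} [Add S] (f : ℕ → S) (H : Finset ℕ) : Option S :=
  osumO ((H.sort (· ≤ ·)).map fun t => some (f t))

/-- `A ⊆ S` is a J-set: for every `F ∈ P_f(S^ℕ)` there are `a ∈ S` and `H ∈ P_f(ℕ)` with
`a + Σ_{t ∈ H} f(t) ∈ A` for every `f ∈ F`. -/
def IsJSet {S : Type} [Add S] (A : Set S) : Prop :=
  ∀ F : Finset (ℕ → S), F.Nonempty →
    ∃ (a : S) (H : Finset ℕ), H.Nonempty ∧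
      ∀ f ∈ F, ∃ x : S, osumF f H = some x ∧ a + x ∈ A

end TotalSG


namespace CSTAux
open TotalSG

lemma mem_uadd {S : Type} [Add S] {p q : Ultrafilter S} {A : Set S} :
    A ∈ uadd p q ↔ {x | {y | x + y ∈ A} ∈ q} ∈ p := Iff.rfl

lemma umem_inter {α : Type} {p : Ultrafilter α} {s t : Set α} (hs : s ∈ p) (ht : t ∈ p) :
    s ∩ t ∈ p := Filter.inter_mem hs ht

/-- `A` is piecewise syndetic (with gap bound `d`). -/
def PWS (A : Set ℕ) : Prop :=
  ∃ d : ℕ, ∀ L : ℕ, ∃ x : ℕ, ∀ k ≤ L, ∃ j ≤ d, x + k + j ∈ A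

lemma pws_union {A B : Set ℕ} (h : PWS (A ∪ B)) : PWS A ∨ PWS B := by
  by_cases hA : PWS A
  · exact Or.inl hA
  · right
    obtain ⟨d, hd⟩ := h
    rw [PWS] at hA
    push_neg at hA
    obtain ⟨L₀, hL₀⟩ := hA d
    refine ⟨L₀ + d, fun L => ?_⟩
    obtain ⟨x, hx⟩ := hd (L + L₀)
    refine ⟨x, fun k hk => ?_⟩
    obtain ⟨k₁, hk₁, hnA⟩ := hL₀ (x + k)
    obtain ⟨j, hj, hAB⟩ := hx (k + k₁) (by omega)
    have he : x + (k + k₁) + j = x + k + k₁ + j := by ring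
    rw [he] at hAB
    rcases hAB with hmem | hmem
    · exact absurd hmem (hnA j hj)
    · exact ⟨k₁ + j, by omega, by rw [show x + k + (k₁ + j) = x + k + k₁ + j by ring]; exact hmem⟩

lemma pws_univ : PWS (Set.univ : Set ℕ) := ⟨0, fun L => ⟨0, fun k _ => ⟨0, le_refl 0, trivial⟩⟩⟩

lemma not_pws_empty : ¬ PWS (∅ : Set ℕ) := by
  rintro ⟨d, hd⟩
  obtain ⟨x, hx⟩ := hd 0
  obtain ⟨j, _, hj⟩ := hx 0 le_rfl
  exact hj

lemma pws_finite_union : ∀ T : Finset (Set ℕ), PWS (⋃ A ∈ T, A) → ∃ A ∈ T, PWS A := by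
  intro T
  induction T using Finset.induction_on with
  | empty => intro h; simp only [Finset.notMem_empty, Set.iUnion_of_empty, Set.iUnion_empty] at h
             exact absurd h not_pws_empty
  | insert _ _ hA ih =>
      rename_i A T'
      intro h
      rw [Finset.set_biUnion_insert] at h
      rcases pws_union h with h1 | h2
      · exact ⟨A, Finset.mem_insert_self _ _, h1⟩
      · obtain ⟨B, hB, hB2⟩ := ih h2
        exact ⟨B, Finset.mem_insert_of_mem hB, hB2⟩


lemma exists_pws_ultrafilter : ∃ q : Ultrafilter ℕ, ∀ A ∈ q, PWS A := by
  have cond : ∀ T : Finset (Set ℕ), (↑T : Set (Set ℕ)) ⊆ {B : Set ℕ | ¬ PWS Bᶜ} →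
      (⋂₀ (↑T : Set (Set ℕ))).Nonempty := by
    intro T hT
    by_contra hne
    rw [Set.not_nonempty_iff_eq_empty] at hne
    have hu : (⋃ A ∈ T, Aᶜ) = Set.univ := by
      rw [← Set.compl_iInter₂]
      rw [show (⋂ A ∈ T, A) = ⋂₀ (T : Set (Set ℕ)) from Set.sInter_eq_biInter.symm]
      rw [hne, Set.compl_empty]
    have : PWS (⋃ A ∈ T.image compl, A) := by
      have : (⋃ A ∈ T.image compl, A) = ⋃ A ∈ T, Aᶜ := by
        ext x
        simp only [Set.mem_iUnion, Finset.mem_image, exists_prop, Set.mem_compl_iff]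
        constructor
        · rintro ⟨i, ⟨B, hB, rfl⟩, hx⟩
          exact ⟨B, hB, hx⟩
        · rintro ⟨i, h1, h2⟩
          exact ⟨iᶜ, ⟨i, h1, rfl⟩, h2⟩
      rw [this, hu]; exact pws_univ
    obtain ⟨A, hAT, hApws⟩ := pws_finite_union _ this
    rw [Finset.mem_image] at hAT
    obtain ⟨B, hBT, rfl⟩ := hAT
    exact (hT hBT) (by simpa using hApws)
  obtain ⟨q, hq⟩ := Ultrafilter.exists_ultrafilter_of_finite_inter_nonempty
    {B : Set ℕ | ¬ PWS Bᶜ} cond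
  refine ⟨q, fun A hA => ?_⟩
  by_contra hp
  have : Aᶜ ∈ q := hq (by simpa using hp)
  exact (Ultrafilter.compl_notMem_iff.2 hA) this

def Ppws : Set (Ultrafilter ℕ) := {q | ∀ A ∈ q, PWS A}

lemma isIdeal_Ppws : IsIdeal Ppws := by
  refine ⟨exists_pws_ultrafilter, ?_, ?_⟩
  · intro p q hq A hA
    rw [mem_uadd] at hA
    obtain ⟨x, hx⟩ := Ultrafilter.nonempty_of_mem hA
    obtain ⟨d, hd⟩ := hq _ hx
    refine ⟨d, fun L => ?_⟩
    obtain ⟨x₀, h₀⟩ := hd L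
    refine ⟨x + x₀, fun k hk => ?_⟩
    obtain ⟨j, hj, hm⟩ := h₀ k hk
    exact ⟨j, hj, by rw [show x + x₀ + k + j = x + (x₀ + k + j) by ring]; exact hm⟩
  · intro q hq p A hA
    rw [mem_uadd] at hA
    obtain ⟨d, hd⟩ := hq _ hA
    refine ⟨d, fun L => ?_⟩
    obtain ⟨x₀, h₀⟩ := hd L
    have hV : (⋂ u ∈ Finset.Icc x₀ (x₀ + L + d),
        (if {z | u + z ∈ A} ∈ p then {z | u + z ∈ A} else Set.univ)) ∈ p := by
      refine (Filter.biInter_finset_mem _).mpr fun u _ => ?_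
      split_ifs with h
      · exact h
      · exact Filter.univ_mem
    obtain ⟨z, hz⟩ := Ultrafilter.nonempty_of_mem hV
    rw [Set.mem_iInter₂] at hz
    refine ⟨x₀ + z, fun k hk => ?_⟩
    obtain ⟨j, hj, hm⟩ := h₀ k hk
    have hu : x₀ + k + j ∈ Finset.Icc x₀ (x₀ + L + d) := by
      rw [Finset.mem_Icc]; omega
    simp only [Set.mem_setOf_eq] at hm
    have := hz _ hu
    rw [if_pos hm] at this
    exact ⟨j, hj, by rw [show x₀ + z + k + j = x₀ + k + j + z by ring]; exact this⟩

lemma kset_pws {p : Ultrafilter ℕ} (hp : p ∈ KSet ℕ) : ∀ A ∈ p, PWS A :=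
  Set.mem_sInter.mp hp Ppws isIdeal_Ppws

lemma pws_config {A : Set ℕ} (hA : PWS A) {l : ℕ} (hl : 0 < l) (y : Fin l → ℕ → ℤ) (m : ℕ) :
    ∃ (a : ℕ) (H : Finset ℕ), H.Nonempty ∧ (∀ t ∈ H, m < t) ∧
      ∀ i : Fin l, ∃ c ∈ A, (c : ℤ) = (a : ℤ) + ∑ t ∈ H, y i t := by
  classical
  obtain ⟨d, hd⟩ := hA
  obtain ⟨ι, ιfin, hHJ⟩ := Combinatorics.Line.exists_mono_in_high_dimension (Fin l) (Fin (d+1))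
  haveI := ιfin
  set t : ι → ℕ := fun j => m + 1 + (Fintype.equivFin ι j : ℕ) with ht_def
  have ht_inj : Function.Injective t := by
    intro j₁ j₂ h
    simp only [ht_def] at h
    exact (Fintype.equivFin ι).injective (Fin.val_injective (by omega))
  have htm : ∀ j, m < t j := fun j => by simp only [ht_def]; omega
  set K : ℕ := Finset.univ.sup (fun q : Fin l × ι => (y q.1 (t q.2)).natAbs) with hK_def
  have hK : ∀ i j, (y i (t j)).natAbs ≤ K := fun i j =>
    Finset.le_sup (f := fun q : Fin l × ι => (y q.1 (t q.2)).natAbs) (Finset.mem_univ (i, j))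
  set N := Fintype.card ι with hN
  set Mn : ℕ := N * K with hMn
  have habs : ∀ (s : Finset ι) (w : ι → Fin l), |∑ j ∈ s, y (w j) (t j)| ≤ (Mn : ℤ) := by
    intro s w
    calc |∑ j ∈ s, y (w j) (t j)| ≤ ∑ j ∈ s, |y (w j) (t j)| := Finset.abs_sum_le_sum_abs _ _
    _ ≤ ∑ _j ∈ s, (K : ℤ) := Finset.sum_le_sum (fun j _ => by
          rw [Int.abs_eq_natAbs]; exact_mod_cast hK (w j) j)
    _ = (s.card : ℤ) * K := by rw [Finset.sum_const]; simp [nsmul_eq_mul]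
    _ ≤ (N : ℤ) * K := by
          have h1 : s.card ≤ N := by rw [hN, ← Finset.card_univ]; exact Finset.card_le_univ s
          have h2 : (0:ℤ) ≤ K := Int.natCast_nonneg K
          exact mul_le_mul_of_nonneg_right (by exact_mod_cast h1) h2
    _ = (Mn : ℤ) := by rw [hMn]; push_cast; ring
  obtain ⟨x₀, hx₀⟩ := hd (2 * Mn)
  have hsel : ∀ w : ι → Fin l, ∃ j ≤ d,
      x₀ + ((Mn : ℤ) + ∑ jj, y (w jj) (t jj)).toNat + j ∈ A := by
    intro w
    have h1 := abs_le.mp (habs Finset.univ w)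
    exact hx₀ _ (by omega)
  choose jsel hjsel hmem using hsel
  set Cχ : (ι → Fin l) → Fin (d+1) := fun w => ⟨jsel w, Nat.lt_succ_of_le (hjsel w)⟩ with hCχ
  obtain ⟨line, c₀, hc₀⟩ := hHJ Cχ
  set V : Finset ι := Finset.univ.filter (fun j => line.idxFun j = none) with hV_def
  have hVne : V.Nonempty := by
    obtain ⟨j, hj⟩ := line.proper
    exact ⟨j, by simp [hV_def, hj]⟩
  set i₀ : Fin l := ⟨0, hl⟩
  set w0 : ι → Fin l := fun j => (line.idxFun j).getD i₀ with hw0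
  set R : ℤ := ∑ j ∈ Vᶜ, y (w0 j) (t j) with hR
  have hsplit : ∀ i : Fin l, (∑ jj, y ((line.toFun i) jj) (t jj)) = (∑ j ∈ V, y i (t j)) + R := by
    intro i
    rw [← Finset.sum_add_sum_compl V]
    congr 1
    · refine Finset.sum_congr rfl fun j hj => ?_
      have hnone : line.idxFun j = none := by
        simpa [hV_def] using hj
      show y ((line.idxFun j).getD i) (t j) = y i (t j)
      rw [hnone]; rfl
    · refine Finset.sum_congr rfl fun j hj => ?_
      have hj' : ¬ line.idxFun j = none := by
        simp only [Finset.mem_compl, hV_def, Finset.mem_filter, Finset.mem_univ,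
          true_and] at hj
        exact hj
      obtain ⟨b, hb⟩ := Option.ne_none_iff_exists'.mp hj'
      show y ((line.idxFun j).getD i) (t j) = y (w0 j) (t j)
      rw [hw0]; simp only [hb]; rfl
  have hR2 := abs_le.mp (habs Vᶜ w0)
  rw [← hR] at hR2
  set aZ : ℤ := (x₀ : ℤ) + ((Mn : ℤ) + (c₀ : ℕ) + R) with haZdef
  have haZ0 : 0 ≤ aZ := by omega
  refine ⟨aZ.toNat, V.image t, hVne.image t, fun t' ht' => ?_, fun i => ?_⟩
  · obtain ⟨j, _, rfl⟩ := Finset.mem_image.mp ht'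
    exact htm j
  · have hmono : Cχ (line.toFun i) = c₀ := hc₀ i
    have hj : jsel (line.toFun i) = (c₀ : ℕ) := congrArg Fin.val hmono
    refine ⟨x₀ + ((Mn : ℤ) + ∑ jj, y (line.toFun i jj) (t jj)).toNat + (c₀ : ℕ), ?_, ?_⟩
    · have hmm := hmem (line.toFun i)
      rw [hj] at hmm
      exact hmm
    · have hS := hsplit i
      have hSabs := abs_le.mp (habs Finset.univ (line.toFun i))
      have hsum : ∑ t' ∈ V.image t, y i t' = ∑ j ∈ V, y i (t j) :=
        Finset.sum_image (fun a _ b _ h => ht_inj h)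
      have e1 : (((Mn : ℤ) + ∑ jj, y (line.toFun i jj) (t jj)).toNat : ℤ)
          = (Mn : ℤ) + ∑ jj, y (line.toFun i jj) (t jj) := Int.toNat_of_nonneg (by omega)
      have e2 : (aZ.toNat : ℤ) = aZ := Int.toNat_of_nonneg haZ0
      push_cast
      rw [e1, e2, hsum, hS, haZdef]
      ring


lemma star_mem {p : Ultrafilter ℕ} (hp : uadd p p = p) {C : Set ℕ} (hC : C ∈ p) :
    {n | n ∈ C ∧ {k | n + k ∈ C} ∈ p} ∈ p := by
  have h : {x | {y | x + y ∈ C} ∈ p} ∈ p := by rw [← mem_uadd, hp]; exact hC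
  exact umem_inter hC h

lemma star_step {p : Ultrafilter ℕ} (hp : uadd p p = p) {C : Set ℕ} {c : ℕ}
    (hc : c ∈ {n | n ∈ C ∧ {k | n + k ∈ C} ∈ p}) :
    {k | c + k ∈ {n | n ∈ C ∧ {k' | n + k' ∈ C} ∈ p}} ∈ p := by
  obtain ⟨hc1, hc2⟩ := hc
  have h2 : {x | {z | x + z ∈ {k | c + k ∈ C}} ∈ p} ∈ p := by
    rw [← mem_uadd, hp]; exact hc2
  have h3 : {x | {z | (c + x) + z ∈ C} ∈ p} ∈ p := by
    simpa only [Set.mem_setOf_eq, ← add_assoc] using h2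
  exact umem_inter hc2 h3

/-- The recursion invariant: all blocks nonempty, blocks increasing, all partial
sums over nonempty subsets land in `Cs`. -/
abbrev Inv (Cs : Set ℕ) {l : ℕ} (y : Fin l → ℕ → ℤ) (n : ℕ) (v : Fin n → ℕ × Finset ℕ) : Prop :=
  (∀ k, (v k).2.Nonempty) ∧
  (∀ j k : Fin n, (j : ℕ) < (k : ℕ) → ∀ x ∈ (v j).2, ∀ x' ∈ (v k).2, x < x') ∧
  (∀ F : Finset (Fin n), F.Nonempty → ∀ i : Fin l,
    ∃ c ∈ Cs, (c : ℤ) = ∑ k ∈ F, (((v k).1 : ℤ) + ∑ t ∈ (v k).2, y i t))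

lemma exists_seq (Cs : Set ℕ) {l : ℕ} (y : Fin l → ℕ → ℤ)
    (step : ∀ (m : ℕ) (G : Finset ℕ), (↑G : Set ℕ) ⊆ Cs →
      ∃ (a : ℕ) (H : Finset ℕ), H.Nonempty ∧ (∀ t ∈ H, m < t) ∧
        ∀ i : Fin l, ∃ c ∈ Cs, ((c : ℤ) = (a : ℤ) + ∑ t ∈ H, y i t) ∧ ∀ g ∈ G, g + c ∈ Cs) :
    ∃ (a : ℕ → ℕ) (H : ℕ → Finset ℕ),
      (∀ n, (H n).Nonempty) ∧
      (∀ n, ∀ x ∈ H n, ∀ x' ∈ H (n + 1), x < x') ∧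
      ∀ F : Finset ℕ, F.Nonempty → ∀ i : Fin l,
        ∃ c ∈ Cs, (c : ℤ) = ∑ n ∈ F, ((a n : ℤ) + ∑ t ∈ H n, y i t) := by
  classical
  have inv0 : Inv Cs y 0 (fun i => i.elim0) :=
    ⟨fun k => k.elim0, fun j => j.elim0, fun F hF _ => (hF.choose).elim0⟩
  have stepInv : ∀ (n : ℕ) (v : Fin n → ℕ × Finset ℕ), Inv Cs y n v →
      ∃ w, Inv Cs y (n + 1) (Fin.snoc v w) := by
    intro n v hv
    obtain ⟨hv1, hv2, hv3⟩ := hv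
    choose cc hcc1 hcc2 using hv3
    set G : Finset ℕ :=
      (Finset.univ : Finset ({F : Finset (Fin n) // F.Nonempty} × Fin l)).image
        (fun q => cc q.1.1 q.1.2 q.2) with hG
    have hGsub : (↑G : Set ℕ) ⊆ Cs := by
      intro g hg
      simp only [hG, Finset.coe_image, Set.mem_image] at hg
      obtain ⟨q, _, rfl⟩ := hg
      exact hcc1 _ _ _
    set m : ℕ := Finset.univ.sup (fun k : Fin n => (v k).2.sup id) with hm
    obtain ⟨a, H, hHne, hHm, hconf⟩ := step m G hGsub
    refine ⟨(a, H), ?_, ?_, ?_⟩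
    · intro k
      rcases Fin.eq_castSucc_or_eq_last k with ⟨k', rfl⟩ | rfl
      · rw [Fin.snoc_castSucc]; exact hv1 k'
      · rw [Fin.snoc_last]; exact hHne
    · intro j k hjk x hx x' hx'
      rcases Fin.eq_castSucc_or_eq_last k with ⟨k', rfl⟩ | rfl
      · rcases Fin.eq_castSucc_or_eq_last j with ⟨j', rfl⟩ | rfl
        · rw [Fin.snoc_castSucc] at hx hx'
          exact hv2 j' k' (by simpa using hjk) x hx x' hx'
        · exfalso
          simp only [Fin.val_last, Fin.coe_castSucc] at hjk
          omega
      · rw [Fin.snoc_last] at hx'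
        rcases Fin.eq_castSucc_or_eq_last j with ⟨j', rfl⟩ | rfl
        · rw [Fin.snoc_castSucc] at hx
          have hxm : x ≤ m := le_trans (Finset.le_sup (f := id) hx)
            (Finset.le_sup (f := fun k : Fin n => (v k).2.sup id) (Finset.mem_univ j'))
          exact lt_of_le_of_lt hxm (hHm x' hx')
        · exact absurd hjk (lt_irrefl _)
    · intro F hF i
      set F₀ : Finset (Fin n) := Finset.univ.filter (fun j => Fin.castSucc j ∈ F) with hF₀def
      have hF₀mem : ∀ j : Fin n, j ∈ F₀ ↔ Fin.castSucc j ∈ F := by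
        intro j; rw [hF₀def]; simp
      have hErase : F.erase (Fin.last n) = F₀.image Fin.castSucc := by
        ext k
        rcases Fin.eq_castSucc_or_eq_last k with ⟨k', rfl⟩ | rfl
        · simp only [Finset.mem_erase, Finset.mem_image]
          constructor
          · rintro ⟨-, hk⟩
            exact ⟨k', (hF₀mem k').mpr hk, rfl⟩
          · rintro ⟨j, hj, hjk⟩
            have := (Fin.castSucc_injective n) hjk
            subst this
            exact ⟨(Fin.castSucc_lt_last j).ne, (hF₀mem j).mp hj⟩
        · simp only [Finset.mem_erase, ne_eq, not_true_eq_false, false_and, false_iff,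
            Finset.mem_image, not_exists, not_and]
          intro j _
          exact (Fin.castSucc_lt_last j).ne
      have hsum_img : ∀ f : Fin (n + 1) → ℤ,
          ∑ k ∈ F₀.image Fin.castSucc, f k = ∑ j ∈ F₀, f (Fin.castSucc j) :=
        fun f => Finset.sum_image (fun a₁ _ a₂ _ h => Fin.castSucc_injective n h)
      by_cases hlast : Fin.last n ∈ F
      · by_cases hF₀ne : F₀.Nonempty
        · obtain ⟨c', hc'Cs, hc'eq, hc'G⟩ := hconf i
          have hcG : cc F₀ hF₀ne i ∈ G := by
            rw [hG, Finset.mem_image]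
            exact ⟨(⟨F₀, hF₀ne⟩, i), Finset.mem_univ _, rfl⟩
          refine ⟨cc F₀ hF₀ne i + c', hc'G _ hcG, ?_⟩
          rw [← Finset.add_sum_erase F _ hlast, hErase, hsum_img]
          simp only [Fin.snoc_castSucc, Fin.snoc_last]
          push_cast
          rw [hc'eq, hcc2 F₀ hF₀ne i]
          ring
        · obtain ⟨c', hc'Cs, hc'eq, -⟩ := hconf i
          refine ⟨c', hc'Cs, ?_⟩
          rw [← Finset.add_sum_erase F _ hlast, hErase]
          rw [Finset.not_nonempty_iff_eq_empty.mp hF₀ne]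
          simp only [Finset.image_empty, Finset.sum_empty, add_zero, Fin.snoc_last]
          exact hc'eq
      · have hFeq : F = F₀.image Fin.castSucc := by
          rw [← hErase, Finset.erase_eq_of_notMem hlast]
        have hF₀ne : F₀.Nonempty := by
          rw [hFeq] at hF
          exact Finset.image_nonempty.mp hF
        refine ⟨cc F₀ hF₀ne i, hcc1 _ _ _, ?_⟩
        rw [hFeq, hsum_img]
        simp only [Fin.snoc_castSucc]
        exact hcc2 F₀ hF₀ne i
  choose W hW using stepInv
  let g : ∀ n : ℕ, {v : Fin n → ℕ × Finset ℕ // Inv Cs y n v} := fun n =>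
    Nat.rec ⟨fun i => i.elim0, inv0⟩
      (fun k ih => ⟨Fin.snoc ih.1 (W k ih.1 ih.2), hW k ih.1 ih.2⟩) n
  have gsucc : ∀ n, (g (n + 1)).1 = Fin.snoc (g n).1 (W n (g n).1 (g n).2) := fun n => rfl
  set aH : ℕ → ℕ × Finset ℕ := fun n => (g (n + 1)).1 (Fin.last n) with haH
  have coh : ∀ (n : ℕ) (k : Fin n), (g n).1 k = aH (k : ℕ) := by
    intro n
    induction n with
    | zero => exact fun k => k.elim0
    | succ n ih =>
      intro k
      rcases Fin.eq_castSucc_or_eq_last k with ⟨k', rfl⟩ | rfl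
      · rw [gsucc, Fin.snoc_castSucc]
        simpa using ih k'
      · simp only [Fin.val_last]; rfl
  refine ⟨fun n => (aH n).1, fun n => (aH n).2, ?_, ?_, ?_⟩
  · intro n
    have h1 := (g (n + 1)).2.1 (Fin.last n)
    exact h1
  · intro n x hx x' hx'
    have h2 := (g (n + 2)).2.2.1 ⟨n, by omega⟩ ⟨n + 1, by omega⟩ (by simp)
    rw [coh (n + 2) ⟨n, by omega⟩, coh (n + 2) ⟨n + 1, by omega⟩] at h2
    exact h2 x hx x' hx'
  · intro F hF i
    set mm : ℕ := F.max' hF + 1 with hmm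
    have hFm : ∀ x ∈ F, x < mm := fun x hx => lt_of_le_of_lt (F.le_max' x hx) (by omega)
    set F' : Finset (Fin mm) := F.attachFin hFm with hF'
    have hF'ne : F'.Nonempty := by
      obtain ⟨x, hx⟩ := hF
      exact ⟨⟨x, hFm x hx⟩, by rw [hF']; exact (Finset.mem_attachFin hFm).mpr hx⟩
    obtain ⟨c, hcCs, hceq⟩ := (g mm).2.2.2 F' hF'ne i
    refine ⟨c, hcCs, ?_⟩
    rw [hceq]
    have hcongr : ∀ k ∈ F', (((g mm).1 k).1 : ℤ) + ∑ t ∈ ((g mm).1 k).2, y i t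
        = ((aH (k : ℕ)).1 : ℤ) + ∑ t ∈ (aH (k : ℕ)).2, y i t := fun k _ => by rw [coh mm k]
    rw [Finset.sum_congr rfl hcongr]
    have himg : F'.image (fun k : Fin mm => (k : ℕ)) = F := by
      ext x
      simp only [Finset.mem_image, hF']
      constructor
      · rintro ⟨k, hk, rfl⟩
        exact (Finset.mem_attachFin hFm).mp hk
      · intro hx
        exact ⟨⟨x, hFm x hx⟩, (Finset.mem_attachFin hFm).mpr hx, rfl⟩
    conv_rhs => rw [← himg]
    rw [Finset.sum_image (fun a₁ _ a₂ _ h => Fin.val_injective h)]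

end CSTAux

open TotalSG in
/-- The Original Central Sets Theorem (Furstenberg). -/
theorem original_central_sets_theorem (l : ℕ) (hl : 0 < l) (y : Fin l → ℕ → ℤ)
    (C : Set ℕ) (hC : IsCentral C) :
    ∃ (a : ℕ → ℕ) (H : ℕ → Finset ℕ),
      (∀ n, (H n).Nonempty) ∧
      (∀ n, ∀ x ∈ H n, ∀ x' ∈ H (n + 1), x < x') ∧
      ∀ F : Finset ℕ, F.Nonempty → ∀ i : Fin l,
        ∃ c ∈ C, (c : ℤ) = ∑ n ∈ F, ((a n : ℤ) + ∑ t ∈ H n, y i t) := by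
  classical
  obtain ⟨p, hpp, hpK, hCp⟩ := hC
  set Cs : Set ℕ := {n | n ∈ C ∧ {k | n + k ∈ C} ∈ p} with hCsdef
  have hCsp : Cs ∈ p := CSTAux.star_mem hpp hCp
  have hstep : ∀ (m : ℕ) (G : Finset ℕ), (↑G : Set ℕ) ⊆ Cs →
      ∃ (a : ℕ) (H : Finset ℕ), H.Nonempty ∧ (∀ t ∈ H, m < t) ∧
        ∀ i : Fin l, ∃ c ∈ Cs, ((c : ℤ) = (a : ℤ) + ∑ t ∈ H, y i t) ∧ ∀ g ∈ G, g + c ∈ Cs := by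
    intro m G hG
    have hB : (Cs ∩ ⋂ g ∈ G, {k | g + k ∈ Cs}) ∈ p := by
      refine CSTAux.umem_inter hCsp ?_
      refine (Filter.biInter_finset_mem G).mpr fun g hg => ?_
      exact CSTAux.star_step hpp (hG hg)
    have hPWS := CSTAux.kset_pws hpK _ hB
    obtain ⟨a, H, h1, h2, h3⟩ := CSTAux.pws_config hPWS hl y m
    refine ⟨a, H, h1, h2, fun i => ?_⟩
    obtain ⟨c, hcB, hceq⟩ := h3 i
    obtain ⟨hc1, hc2⟩ := hcB
    rw [Set.mem_iInter₂] at hc2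
    exact ⟨c, hc1, hceq, fun g hg => hc2 g hg⟩
  obtain ⟨a, H, h1, h2, h3⟩ := CSTAux.exists_seq Cs y hstep
  refine ⟨a, H, h1, h2, fun F hF i => ?_⟩
  obtain ⟨c, hcCs, hceq⟩ := h3 F hF i
  exact ⟨c, hcCs.1, hceq⟩
end

section
/- (Phulara's Central Sets Theorem.) Let (S,+) be a commutative semigroup, let r be an idempotent in J(S), and let ⟨C_n⟩_{n=1}^∞ be a sequence of members of r with C_{n+1} ⊆ C_n for each n. Then there exist functions α : P_f(S^ℕ) → S and H : P_f(S^ℕ) → P_f(ℕ) such that: (1) if F, G ∈ P_f(S^ℕ) and F ⊊ G, then max H(F) < min H(G); and (2) whenever t ∈ ℕ, G_1 ⊊ G_2 ⊊ … ⊊ G_t are members of P_f(S^ℕ) with |G_1| = m, and f_i ∈ G_i for each i ∈ {1,…,t}, then Σ_{i=1}^{t} (α(G_i) + Σ_{s∈H(G_i)} f_i(s)) ∈ C_m. -/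
open scoped Classical

namespace PhularaAux
open TotalSG

theorem mem_uadd {S : Type} [Add S] {p q : Ultrafilter S} {A : Set S} :
    A ∈ uadd p q ↔ {x | {y | x + y ∈ A} ∈ q} ∈ p := Filter.mem_bind'

def star {S : Type} [Add S] (r : Ultrafilter S) (A : Set S) : Set S :=
  {x | x ∈ A ∧ {y | x + y ∈ A} ∈ r}

theorem star_subset {S : Type} [Add S] {r : Ultrafilter S} {A : Set S} :
    star r A ⊆ A := fun _ hx => hx.1

theorem star_mem {S : Type} [Add S] {r : Ultrafilter S} (hridem : uadd r r = r)
    {A : Set S} (hA : A ∈ r) : star r A ∈ r := by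
  have h1 : {x | {y | x + y ∈ A} ∈ r} ∈ r := by
    rw [← hridem] at hA; exact mem_uadd.1 hA
  exact Filter.inter_mem hA h1

theorem star_star {S : Type} [AddCommSemigroup S] {r : Ultrafilter S}
    (hridem : uadd r r = r) {A : Set S} {x : S} (hx : x ∈ star r A) :
    {y | x + y ∈ star r A} ∈ r := by
  obtain ⟨hxA, hB⟩ := hx
  refine Filter.mem_of_superset (star_mem hridem hB) ?_
  rintro y ⟨hy1, hy2⟩
  refine ⟨hy1, ?_⟩
  have : {z | y + z ∈ {y' | x + y' ∈ A}} = {z | (x + y) + z ∈ A} := by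
    ext z; simp [add_assoc]
  rwa [this] at hy2

theorem oadd_assoc {S : Type} [AddCommSemigroup S] (a b c : Option S) :
    oadd (oadd a b) c = oadd a (oadd b c) := by
  cases a <;> cases b <;> cases c <;> simp [oadd, add_assoc]

theorem osumO_cons {S : Type} [Add S] (x : Option S) (l : List (Option S)) :
    osumO (x :: l) = oadd x (osumO l) := rfl

theorem osumO_append {S : Type} [AddCommSemigroup S] (l₁ l₂ : List (Option S)) :
    osumO (l₁ ++ l₂) = oadd (osumO l₁) (osumO l₂) := by
  induction l₁ with
  | nil => rfl
  | cons a l ih => rw [List.cons_append, osumO_cons, osumO_cons, ih, oadd_assoc]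

theorem osumO_singleton {S : Type} [Add S] (x : Option S) : osumO [x] = x := by
  cases x <;> rfl

theorem oadd_some_some {S : Type} [Add S] (a b : S) :
    oadd (some a) (some b) = some (a + b) := rfl

theorem osumF_isSome {S : Type} [Add S] (f : ℕ → S) {H : Finset ℕ} (hH : H.Nonempty) :
    ∃ x, osumF f H = some x := by
  have hlen : (H.sort (· ≤ ·)) ≠ [] := by
    intro h
    have := Finset.length_sort (α := ℕ) (· ≤ ·) (s := H)
    rw [h] at this
    simp at this
    exact hH.ne_empty (Finset.card_eq_zero.1 this.symm)
  obtain ⟨a, l, hl⟩ := List.exists_cons_of_ne_nil hlen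
  rw [osumF, hl]
  simp only [List.map_cons, osumO_cons]
  cases h : osumO (l.map fun t => some (f t)) <;> exact ⟨_, rfl⟩

theorem sort_map_mono (H : Finset ℕ) (g : ℕ → ℕ) (hg : StrictMono g) :
    (H.image g).sort (· ≤ ·) = (H.sort (· ≤ ·)).map g := by
  refine (fun hp h1 h2 => List.Perm.eq_of_pairwise' (r := (· ≤ ·)) h1 h2 hp) ?_ ?_ ?_
  · rw [← Multiset.coe_eq_coe]
    have h1 : ((H.image g).sort (· ≤ ·) : Multiset ℕ) = (H.image g).val :=
      Finset.sort_eq _ _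
    have h2 : ((H.sort (· ≤ ·)).map g : Multiset ℕ) = H.val.map g := by
      rw [← Multiset.map_coe, Finset.sort_eq]
    rw [h1, h2]
    rw [Finset.image_val, Multiset.dedup_eq_self.2]
    exact (H.nodup.map hg.injective)
  · exact Finset.pairwise_sort _ _
  · exact List.Pairwise.map g (fun a b h => hg.monotone h) (Finset.pairwise_sort _ _)

theorem osumF_image_shift {S : Type} [Add S] (f : ℕ → S) (c : ℕ) (H : Finset ℕ) :
    osumF f (H.image (· + c)) = osumF (fun t => f (t + c)) H := by
  rw [osumF, osumF, sort_map_mono H (· + c) (fun a b h => by show a + c < b + c; omega), List.map_map]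
  rfl

theorem jset_above {S : Type} [Add S] {r : Ultrafilter S} (hrJ : ∀ A ∈ r, IsJSet A)
    {A : Set S} (hA : A ∈ r) (F : Finset (ℕ → S)) (hF : F.Nonempty) (k : ℕ) :
    ∃ (a : S) (H : Finset ℕ), H.Nonempty ∧ (∀ x ∈ H, k < x) ∧
      ∀ f ∈ F, ∃ x, osumF f H = some x ∧ a + x ∈ A := by
  obtain ⟨a, H0, hH0, h⟩ := hrJ A hA (F.image fun f => fun t => f (t + (k+1))) (hF.image _)
  refine ⟨a, H0.image (· + (k+1)), hH0.image _, ?_, ?_⟩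
  · intro x hx
    obtain ⟨y, _, rfl⟩ := Finset.mem_image.1 hx
    omega
  · intro f hf
    obtain ⟨x, hx1, hx2⟩ := h _ (Finset.mem_image_of_mem _ hf)
    exact ⟨x, by rw [osumF_image_shift]; exact hx1, hx2⟩

variable {S : Type} [AddCommSemigroup S]

/-- the target set for the choice at `F`. -/
def Bset (r : Ultrafilter S) (C : ℕ → Set S) (n : ℕ) (Dp : Finset (ℕ × S)) : Set S :=
  star r (C n) ∩ ⋂ p ∈ (Dp : Set (ℕ × S)), {z | p.2 + z ∈ star r (C p.1)}

/-- choice of `(α F, H F)`. -/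
noncomputable def step (r : Ultrafilter S) (C : ℕ → Set S) (F : Finset (ℕ → S))
    (K : ℕ) (Dp : Finset (ℕ × S)) : S × Finset ℕ :=
  haveI : Nonempty S := Filter.nonempty_of_neBot ↑r
  if h : ∃ (a : S) (H : Finset ℕ), H.Nonempty ∧ (∀ x ∈ H, K < x) ∧
      ∀ f ∈ F, ∃ x, osumF f H = some x ∧ a + x ∈ Bset r C F.card Dp
  then ⟨h.choose, h.choose_spec.choose⟩
  else ⟨Classical.arbitrary S, ∅⟩

theorem step_spec {r : Ultrafilter S} {C : ℕ → Set S} {F : Finset (ℕ → S)}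
    {K : ℕ} {Dp : Finset (ℕ × S)}
    (h : ∃ (a : S) (H : Finset ℕ), H.Nonempty ∧ (∀ x ∈ H, K < x) ∧
      ∀ f ∈ F, ∃ x, osumF f H = some x ∧ a + x ∈ Bset r C F.card Dp) :
    (step r C F K Dp).2.Nonempty ∧ (∀ x ∈ (step r C F K Dp).2, K < x) ∧
      ∀ f ∈ F, ∃ x, osumF f (step r C F K Dp).2 = some x ∧
        (step r C F K Dp).1 + x ∈ Bset r C F.card Dp := by
  rw [step, dif_pos h]
  exact h.choose_spec.choose_spec

/-- the set of chain sums ending at `F`, built from `(a, H)` and the sums `Dp` for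
proper subsets. -/
noncomputable def Dof (F : Finset (ℕ → S)) (a : S) (H : Finset ℕ) (Dp : Finset (ℕ × S)) :
    Finset (ℕ × S) :=
  (F.image fun f => (F.card, a + (osumF f H).getD a)) ∪
    ((Dp ×ˢ F).image fun q => (q.1.1, q.1.2 + (a + (osumF q.2 H).getD a)))

noncomputable def gfun (r : Ultrafilter S) (C : ℕ → Set S) (F : Finset (ℕ → S)) :
    S × Finset ℕ × Finset (ℕ × S) :=
  let K : ℕ := (F.powerset.erase F).attach.sup fun G => ((gfun r C G.1).2.1).sup id
  let Dp : Finset (ℕ × S) := (F.powerset.erase F).attach.sup fun G => (gfun r C G.1).2.2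
  let aH := step r C F K Dp
  (aH.1, aH.2, Dof F aH.1 aH.2 Dp)
termination_by F.card
decreasing_by
  all_goals {
    have h := G.2
    simp only [Finset.mem_erase, Finset.mem_powerset] at h
    exact Finset.card_lt_card (lt_of_le_of_ne h.2 h.1) }

noncomputable def galpha (r : Ultrafilter S) (C : ℕ → Set S) (F : Finset (ℕ → S)) : S :=
  (gfun r C F).1
noncomputable def gH (r : Ultrafilter S) (C : ℕ → Set S) (F : Finset (ℕ → S)) : Finset ℕ :=
  (gfun r C F).2.1
noncomputable def gD (r : Ultrafilter S) (C : ℕ → Set S) (F : Finset (ℕ → S)) :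
    Finset (ℕ × S) := (gfun r C F).2.2
noncomputable def gK (r : Ultrafilter S) (C : ℕ → Set S) (F : Finset (ℕ → S)) : ℕ :=
  (F.powerset.erase F).attach.sup fun G => (gH r C G.1).sup id
noncomputable def gDp (r : Ultrafilter S) (C : ℕ → Set S) (F : Finset (ℕ → S)) :
    Finset (ℕ × S) := (F.powerset.erase F).attach.sup fun G => gD r C G.1

theorem gfun_eq (r : Ultrafilter S) (C : ℕ → Set S) (F : Finset (ℕ → S)) :
    gfun r C F = ((step r C F (gK r C F) (gDp r C F)).1,
      (step r C F (gK r C F) (gDp r C F)).2,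
      Dof F (step r C F (gK r C F) (gDp r C F)).1
        (step r C F (gK r C F) (gDp r C F)).2 (gDp r C F)) := by
  rw [gfun]; rfl

theorem galpha_eq (r : Ultrafilter S) (C : ℕ → Set S) (F : Finset (ℕ → S)) :
    galpha r C F = (step r C F (gK r C F) (gDp r C F)).1 := by
  rw [galpha, gfun_eq]

theorem gH_eq (r : Ultrafilter S) (C : ℕ → Set S) (F : Finset (ℕ → S)) :
    gH r C F = (step r C F (gK r C F) (gDp r C F)).2 := by
  rw [gH, gfun_eq]

theorem gD_eq (r : Ultrafilter S) (C : ℕ → Set S) (F : Finset (ℕ → S)) :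
    gD r C F = Dof F (galpha r C F) (gH r C F) (gDp r C F) := by
  rw [gD, gfun_eq, galpha_eq, gH_eq]

theorem mem_gDp {r : Ultrafilter S} {C : ℕ → Set S} {F : Finset (ℕ → S)} {p : ℕ × S} :
    p ∈ gDp r C F ↔ ∃ G, G ⊂ F ∧ p ∈ gD r C G := by
  rw [gDp, Finset.mem_sup]
  constructor
  · rintro ⟨⟨G, hG⟩, -, hp⟩
    simp only [Finset.mem_erase, Finset.mem_powerset] at hG
    exact ⟨G, lt_of_le_of_ne hG.2 hG.1, hp⟩
  · rintro ⟨G, hG, hp⟩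
    exact ⟨⟨G, by simp [Finset.mem_erase, Finset.mem_powerset, hG.ne, hG.subset]⟩,
      Finset.mem_attach _ _, hp⟩


theorem inv {r : Ultrafilter S} (hridem : uadd r r = r) (hrJ : ∀ A ∈ r, IsJSet A)
    {C : ℕ → Set S} (hC : ∀ n, 1 ≤ n → C n ∈ r) :
    ∀ F : Finset (ℕ → S),
      (F.Nonempty → (gH r C F).Nonempty ∧ ∀ x ∈ gH r C F, gK r C F < x) ∧
      (∀ p ∈ gD r C F, 1 ≤ p.1 ∧ p.2 ∈ star r (C p.1)) := by
  intro F
  induction F using Finset.strongInduction with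
  | _ F IH =>
    have hBmem : ∀ p ∈ gDp r C F, {z | p.2 + z ∈ star r (C p.1)} ∈ r := by
      intro p hp
      obtain ⟨G, hG, hpD⟩ := mem_gDp.1 hp
      exact star_star hridem ((IH G hG).2 p hpD).2
    have key : F.Nonempty → (gH r C F).Nonempty ∧ (∀ x ∈ gH r C F, gK r C F < x) ∧
        ∀ f ∈ F, ∃ x, osumF f (gH r C F) = some x ∧
          galpha r C F + x ∈ Bset r C F.card (gDp r C F) := by
      intro hFne
      have hB : Bset r C F.card (gDp r C F) ∈ r := by
        apply Filter.inter_mem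
        · exact star_mem hridem (hC _ (Finset.card_pos.2 hFne))
        · exact (Filter.biInter_mem (Finset.finite_toSet _)).2 fun p hp => hBmem p hp
      have hex := jset_above hrJ hB F hFne (gK r C F)
      rw [gH_eq, galpha_eq]
      exact step_spec hex
    refine ⟨fun hFne => ⟨(key hFne).1, (key hFne).2.1⟩, ?_⟩
    intro p hp
    rw [gD_eq, Dof] at hp
    rcases Finset.mem_union.1 hp with h | h
    · obtain ⟨f, hf, rfl⟩ := Finset.mem_image.1 h
      have hFne : F.Nonempty := ⟨f, hf⟩
      obtain ⟨x, hx1, hx2⟩ := (key hFne).2.2 f hf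
      rw [hx1]
      exact ⟨Finset.card_pos.2 hFne, hx2.1⟩
    · obtain ⟨q, hq, rfl⟩ := Finset.mem_image.1 h
      rw [Finset.mem_product] at hq
      have hFne : F.Nonempty := ⟨q.2, hq.2⟩
      obtain ⟨x, hx1, hx2⟩ := (key hFne).2.2 q.2 hq.2
      obtain ⟨G, hG, hpD⟩ := mem_gDp.1 hq.1
      obtain ⟨hm, -⟩ := (IH G hG).2 q.1 hpD
      rw [hx1]
      refine ⟨hm, ?_⟩
      exact Set.mem_iInter₂.1 hx2.2 q.1 hq.1


theorem chain {r : Ultrafilter S} (hridem : uadd r r = r) (hrJ : ∀ A ∈ r, IsJSet A)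
    {C : ℕ → Set S} (hC : ∀ n, 1 ≤ n → C n ∈ r) :
    ∀ t : ℕ, ∀ G : Fin (t+1) → Finset (ℕ → S),
      (∀ i, (G i).Nonempty) → (∀ i j : Fin (t+1), i < j → G i ⊂ G j) →
      ∀ f : Fin (t+1) → ℕ → S, (∀ i, f i ∈ G i) →
      ∃ c, (osumO (List.ofFn fun i => oadd (some (galpha r C (G i)))
          (osumF (f i) (gH r C (G i)))) = some c)
        ∧ ((G 0).card, c) ∈ gD r C (G (Fin.last t)) := by
  intro t
  induction t with
  | zero =>
    intro G hne hmono f hf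
    obtain ⟨x, hx⟩ := osumF_isSome (f 0) ((inv hridem hrJ hC (G 0)).1 (hne 0)).1
    refine ⟨galpha r C (G 0) + x, ?_, ?_⟩
    · simp only [List.ofFn_succ, List.ofFn_zero]
      rw [osumO_singleton, hx]
      rfl
    · show _ ∈ gD r C (G 0)
      rw [gD_eq, Dof]
      apply Finset.mem_union_left
      apply Finset.mem_image.2
      exact ⟨f 0, hf 0, by rw [hx]; rfl⟩
  | succ t IH =>
    intro G hne hmono f hf
    obtain ⟨c, hc1, hc2⟩ := IH (fun i => G i.castSucc) (fun i => hne _)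
      (fun i j hij => hmono _ _ (Fin.castSucc_lt_castSucc_iff.2 hij))
      (fun i => f i.castSucc) (fun i => hf _)
    obtain ⟨x, hx⟩ := osumF_isSome (f (Fin.last (t+1)))
      ((inv hridem hrJ hC (G (Fin.last (t+1)))).1 (hne _)).1
    refine ⟨c + (galpha r C (G (Fin.last (t+1))) + x), ?_, ?_⟩
    · rw [List.ofFn_succ', List.concat_eq_append, osumO_append, osumO_singleton, hx]
      rw [show (List.ofFn fun i : Fin (t+1) =>
          oadd (some (galpha r C (G i.castSucc))) (osumF (f i.castSucc) (gH r C (G i.castSucc))))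
        = (List.ofFn fun i : Fin (t+1) =>
          oadd (some (galpha r C ((fun j => G j.castSucc) i)))
            (osumF ((fun j => f j.castSucc) i) (gH r C ((fun j => G j.castSucc) i)))) from rfl, hc1]
      rfl
    · rw [gD_eq, Dof]
      apply Finset.mem_union_right
      apply Finset.mem_image.2
      refine ⟨(((G 0).card, c), f (Fin.last (t+1))), ?_, ?_⟩
      · rw [Finset.mem_product]
        refine ⟨mem_gDp.2 ⟨G ((Fin.last t).castSucc), hmono _ _ (Fin.castSucc_lt_last _), ?_⟩, hf _⟩
        have h0 : (fun i : Fin (t+1) => G i.castSucc) 0 = G 0 := by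
          simp
        rw [← h0]
        exact hc2
      · simp [hx]

end PhularaAux



open TotalSG in
/-- Phulara's Central Sets Theorem for commutative semigroups: a decreasing sequence
`⟨C_n⟩` of members of an idempotent `r ∈ J(S)`, with the conclusion landing in `C_m`
where `m = |G_1|`. -/
theorem phulara_CST {S : Type} [AddCommSemigroup S]
    (r : Ultrafilter S) (hridem : uadd r r = r) (hrJ : ∀ A ∈ r, IsJSet A)
    (C : ℕ → Set S) (hC : ∀ n, 1 ≤ n → C n ∈ r)
    (hCdec : ∀ n, 1 ≤ n → C (n + 1) ⊆ C n) :
    ∃ (α : Finset (ℕ → S) → S) (H : Finset (ℕ → S) → Finset ℕ),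
      (∀ F : Finset (ℕ → S), F.Nonempty → (H F).Nonempty) ∧
      (∀ F G : Finset (ℕ → S), F.Nonempty → F ⊂ G → ∀ x ∈ H F, ∀ y ∈ H G, x < y) ∧
      ∀ t : ℕ, ∀ ht : 0 < t, ∀ G : Fin t → Finset (ℕ → S),
        (∀ i, (G i).Nonempty) → (∀ i j : Fin t, i < j → G i ⊂ G j) →
        ∀ f : Fin t → ℕ → S, (∀ i, f i ∈ G i) →
        ∃ c ∈ C ((G ⟨0, ht⟩).card),
          osumO (List.ofFn fun i : Fin t =>
            oadd (some (α (G i))) (osumF (f i) (H (G i)))) = some c := by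
  open PhularaAux in
  refine ⟨galpha r C, gH r C, ?_, ?_, ?_⟩
  · intro F hF
    exact ((inv hridem hrJ hC F).1 hF).1
  · intro F G hF hFG x hx y hy
    have hGne : G.Nonempty := hF.mono hFG.subset
    have h1 : gK r C G < y := ((inv hridem hrJ hC G).1 hGne).2 y hy
    have h2 : (gH r C F).sup id ≤ gK r C G := by
      have hFmem : F ∈ G.powerset.erase G := by
        simp [Finset.mem_erase, Finset.mem_powerset, hFG.ne, hFG.subset]
      exact Finset.le_sup (f := fun G' : {x // x ∈ G.powerset.erase G} => (gH r C G'.1).sup id)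
        (Finset.mem_attach _ ⟨F, hFmem⟩)
    have h3 : x ≤ (gH r C F).sup id := Finset.le_sup (f := id) hx
    omega
  · rintro t ht G hne hmono f hf
    obtain ⟨t, rfl⟩ : ∃ t', t = t' + 1 := ⟨t - 1, by omega⟩
    obtain ⟨c, hc1, hc2⟩ := chain hridem hrJ hC t G hne hmono f hf
    refine ⟨c, ?_, hc1⟩
    have := ((inv hridem hrJ hC (G (Fin.last t))).2 _ hc2).2
    have h0 : (⟨0, ht⟩ : Fin (t+1)) = 0 := rfl
    rw [h0]
    exact star_subset this
end
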